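/- For any real (N²−1)×(M²−1) matrix v and orthogonal bases {σ_i}, {τ_j} of traceless Hermitian matrices, there exist new orthogonal bases {σ'_i}, {τ'_j} (obtained by real orthogonal transformations of the original ones, hence still traceless Hermitian with tr(σ'_iσ'_j)=2δ_ij) such that V = Σ_{ij} v_{ij} σ_i ⊗ τ_j = Σ_{k=1}^{L²−1} v_k σ'_k ⊗ τ'_k with v_k ≥ 0, where L = min(N,M). -/

import Mathlib

open Matrix Kronecker Complex BigOperators

/-- Partial trace over the second (B) factor. -/
noncomputable def ptraceB {m n : Type*} [Fintype n] (C : Matrix (m × n) (m × n) ℂ) :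
    Matrix m m ℂ :=
  fun i j => ∑ k, C (i, k) (j, k)

/-- Partial trace over the first (A) factor. -/
noncomputable def ptraceA {m n : Type*} [Fintype m] (C : Matrix (m × n) (m × n) ℂ) :
    Matrix n n ℂ :=
  fun i j => ∑ k, C (k, i) (k, j)


lemma obasis_rows {q : ℕ} (b : OrthonormalBasis (Fin q) ℝ (EuclideanSpace ℝ (Fin q)))
    (i j : Fin q) : (∑ k, b k i * b k j) = if i = j then 1 else 0 := by
  classical
  let W : Matrix (Fin q) (Fin q) ℝ := Matrix.of fun i k => b k i
  have h1 : Wᵀ * W = 1 := by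
    ext k l
    have h := (orthonormal_iff_ite.mp b.orthonormal) k l
    simp only [PiLp.inner_apply, RCLike.inner_apply, starRingEnd_apply, star_trivial] at h
    simpa [Matrix.mul_apply, Matrix.one_apply, W, mul_comm] using h
  have h2 : W * Wᵀ = 1 := mul_eq_one_comm.mp h1
  have := congrFun (congrFun h2 i) j
  simpa [Matrix.mul_apply, Matrix.one_apply, W] using this

lemma obasis_cols {q : ℕ} (b : OrthonormalBasis (Fin q) ℝ (EuclideanSpace ℝ (Fin q)))
    (k l : Fin q) : (∑ i, b k i * b l i) = if k = l then 1 else 0 := by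
  have h := (orthonormal_iff_ite.mp b.orthonormal) k l
  simpa [PiLp.inner_apply, RCLike.inner_apply, starRingEnd_apply, star_trivial, mul_comm] using h

lemma dot_aux {n m : ℕ} (A : Matrix (Fin n) (Fin m) ℝ) (x y : Fin m → ℝ) :
    (A *ᵥ x) ⬝ᵥ (A *ᵥ y) = x ⬝ᵥ ((Aᴴ * A) *ᵥ y) := by
  have h1 : A *ᵥ x = x ᵥ* Aᴴ := by
    have := Matrix.star_mulVec A x
    simpa using this
  rw [h1, Matrix.dotProduct_mulVec, Matrix.vecMul_vecMul, ← Matrix.dotProduct_mulVec]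

lemma real_svd (n m : ℕ) (A : Matrix (Fin n) (Fin m) ℝ) :
    ∃ (U : Matrix (Fin n) (Fin n) ℝ) (V : Matrix (Fin m) (Fin m) ℝ)
      (w : Fin (min n m) → ℝ),
      U ∈ Matrix.orthogonalGroup (Fin n) ℝ ∧ V ∈ Matrix.orthogonalGroup (Fin m) ℝ ∧
      (∀ k, 0 ≤ w k) ∧
      ∀ i j, A i j = ∑ k, w k * U i (Fin.castLE (min_le_left n m) k)
        * V j (Fin.castLE (min_le_right n m) k) := by
  classical
  have hS : (Aᴴ * A).IsHermitian := Matrix.isHermitian_conjTranspose_mul_self A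
  set μ : Fin m → ℝ := hS.eigenvalues with hμdef
  set u := hS.eigenvectorBasis with hudef
  have hμ0 : ∀ k, 0 ≤ μ k := fun k =>
    (Matrix.posSemidef_conjTranspose_mul_self A).eigenvalues_nonneg k
  set π : Equiv.Perm (Fin m) := Tuple.sort (fun k => -μ k) with hπdef
  set ν : Fin m → ℝ := fun k => μ (π k) with hνdef
  have hanti : Antitone ν := by
    have hmono := Tuple.monotone_sort (fun k => -μ k)
    intro a b hab
    have := hmono hab
    simp only [Function.comp_apply] at this
    simpa [hνdef] using neg_le_neg_iff.mp this
  have hν0 : ∀ k, 0 ≤ ν k := fun k => hμ0 (π k)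
  set c : Fin m → (Fin n → ℝ) := fun k => A *ᵥ ⇑(u (π k)) with hcdef
  have hc : ∀ k l, c k ⬝ᵥ c l = if k = l then ν k else 0 := by
    intro k l
    rw [hcdef]
    simp only
    rw [dot_aux, hS.mulVec_eigenvectorBasis]
    rw [dotProduct_smul]
    have : ⇑(u (π k)) ⬝ᵥ ⇑(u (π l)) = if π k = π l then 1 else 0 := by
      simpa [dotProduct] using obasis_cols u (π k) (π l)
    rw [this]
    by_cases h : k = l
    · simp [h, hνdef]
      rfl
    · simp [h, fun hh => h (π.injective hh)]
  set r : ℕ := (Finset.univ.filter fun k : Fin m => ν k ≠ 0).card with hrdef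
  have h_iff : ∀ k : Fin m, ν k ≠ 0 ↔ (k : ℕ) < r := by
    intro k
    constructor
    · intro hk
      have hsub : Finset.Iic k ⊆ Finset.univ.filter fun k : Fin m => ν k ≠ 0 := by
        intro j hj
        rw [Finset.mem_Iic] at hj
        refine Finset.mem_filter.mpr ⟨Finset.mem_univ _, ?_⟩
        have := hanti hj
        have hpos : 0 < ν k := lt_of_le_of_ne (hν0 k) (Ne.symm hk)
        exact ne_of_gt (lt_of_lt_of_le hpos this)
      have := Finset.card_le_card hsub
      rw [Fin.card_Iic] at this
      omega
    · intro hk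
      by_contra hne
      have hsub : (Finset.univ.filter fun j : Fin m => ν j ≠ 0) ⊆ Finset.Iio k := by
        intro j hj
        rw [Finset.mem_filter] at hj
        rw [Finset.mem_Iio]
        by_contra hge
        push_neg at hge
        have := hanti hge
        exact hj.2 (le_antisymm (hne ▸ this) (hν0 j))
      have := Finset.card_le_card hsub
      rw [Fin.card_Iio] at this
      omega
  have hr_le_m : r ≤ m := by
    have := Finset.card_filter_le (Finset.univ : Finset (Fin m)) fun k : Fin m => ν k ≠ 0
    simpa using this
  -- normalized columns
  set d : Fin m → EuclideanSpace ℝ (Fin n) :=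
    fun k => (Real.sqrt (ν k))⁻¹ • ((WithLp.equiv 2 (Fin n → ℝ)).symm (c k)) with hddef
  have hd : ∀ k l : Fin m, ν k ≠ 0 → ν l ≠ 0 →
      inner ℝ (d k) (d l) = if k = l then 1 else 0 := by
    intro k l hk hl
    have hkpos : 0 < ν k := lt_of_le_of_ne (hν0 k) (Ne.symm hk)
    have hlpos : 0 < ν l := lt_of_le_of_ne (hν0 l) (Ne.symm hl)
    have hinner : inner ℝ ((WithLp.equiv 2 (Fin n → ℝ)).symm (c k))
        ((WithLp.equiv 2 (Fin n → ℝ)).symm (c l)) = c k ⬝ᵥ c l := by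
      simp [PiLp.inner_apply, RCLike.inner_apply, starRingEnd_apply, star_trivial,
        WithLp.equiv_symm_apply, PiLp.toLp_apply, dotProduct, mul_comm]
    have : inner ℝ (d k) (d l) =
        (Real.sqrt (ν k))⁻¹ * ((Real.sqrt (ν l))⁻¹ * (c k ⬝ᵥ c l)) := by
      rw [hddef]
      simp only [real_inner_smul_left, real_inner_smul_right, hinner]
      ring
    rw [this, hc]
    by_cases h : k = l
    · subst h
      simp [Real.mul_self_sqrt (hν0 k), ← mul_assoc, ← mul_inv,
        Real.sqrt_mul_self (hν0 k), ne_of_gt hkpos]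
    · simp [h]
  have hr_le_n : r ≤ n := by
    have hon : Orthonormal ℝ (fun k : {k : Fin m // ν k ≠ 0} => d k.1) := by
      rw [orthonormal_iff_ite]
      intro k l
      rw [hd k.1 l.1 k.2 l.2]
      simp [Subtype.ext_iff]
    have hli := hon.linearIndependent
    have hcard := hli.fintype_card_le_finrank
    rw [finrank_euclideanSpace_fin] at hcard
    rwa [Fintype.card_subtype] at hcard
  have hr_le : r ≤ min n m := le_min hr_le_n hr_le_m
  -- the extension family
  set g : Fin n → EuclideanSpace ℝ (Fin n) :=
    fun i => if h : (i : ℕ) < r then d ⟨i, lt_of_lt_of_le h hr_le_m⟩ else 0 with hgdef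
  have hg : Orthonormal ℝ (Set.restrict {i : Fin n | (i : ℕ) < r} g) := by
    rw [orthonormal_iff_ite]
    rintro ⟨i, hi⟩ ⟨j, hj⟩
    simp only [Set.restrict_apply, hgdef]
    simp only [Set.mem_setOf_eq] at hi hj
    simp only [Set.restrict, Set.domRestrict, dif_pos hi, dif_pos hj]
    rw [hd _ _ ((h_iff _).mpr hi) ((h_iff _).mpr hj)]
    simp only [Fin.mk.injEq, Subtype.mk.injEq, Fin.val_inj]
  obtain ⟨b, hb⟩ := hg.exists_orthonormalBasis_extension_of_card_eq
    (by simp [finrank_euclideanSpace_fin]) 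
  -- matrices
  refine ⟨Matrix.of fun i k => b k i, Matrix.of fun j k => u (π k) j,
    fun k => if h : (k : ℕ) < r then Real.sqrt (ν ⟨k, lt_of_lt_of_le h hr_le_m⟩) else 0,
    ?_, ?_, ?_, ?_⟩
  · rw [Matrix.mem_orthogonalGroup_iff]
    ext i j
    simp only [Matrix.mul_apply, Matrix.star_apply, star_trivial, Matrix.of_apply,
      Matrix.one_apply]
    exact obasis_rows b i j
  · rw [Matrix.mem_orthogonalGroup_iff]
    ext i j
    simp only [Matrix.mul_apply, Matrix.star_apply, star_trivial, Matrix.of_apply,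
      Matrix.one_apply, Matrix.transpose_apply]
    rw [Fintype.sum_equiv π (fun k => u (π k) i * u (π k) j)
      (fun k => u k i * u k j) (fun k => rfl)]
    exact obasis_rows u i j
  · intro k
    by_cases h : (k : ℕ) < r
    · simp [dif_pos h, Real.sqrt_nonneg]
    · simp [dif_neg h]
  · intro i j
    have key1 : ∑ k : Fin m, c k i * u (π k) j = A i j := by
      have hterm : ∀ k : Fin m, c k i * u (π k) j
          = ∑ t, A i t * (u (π k) t * u (π k) j) := by
        intro k
        have hck : c k i = ∑ t, A i t * u (π k) t := by
          rw [hcdef]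
          simp [Matrix.mulVec, dotProduct]
        rw [hck, Finset.sum_mul]
        exact Finset.sum_congr rfl fun t _ => by ring
      rw [Finset.sum_congr rfl fun k _ => hterm k, Finset.sum_comm]
      have h2 : ∀ t, ∑ k, A i t * (u (π k) t * u (π k) j)
          = A i t * if t = j then 1 else 0 := by
        intro t
        rw [← Finset.mul_sum]
        congr 1
        rw [Fintype.sum_equiv π (fun k => u (π k) t * u (π k) j)
          (fun k => u k t * u k j) (fun k => rfl)]
        exact obasis_rows u t j
      rw [Finset.sum_congr rfl fun t _ => h2 t]
      simp
    have hczero : ∀ k : Fin m, ¬((k : ℕ) < r) → ∀ i' : Fin n, c k i' = 0 := by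
      intro k hk i'
      have hν : ν k = 0 := by
        by_contra h
        exact hk ((h_iff k).mp h)
      have h0 : c k ⬝ᵥ c k = 0 := by rw [hc]; simp [hν]
      have h0' : ∑ t, c k t * c k t = 0 := h0
      have := (Finset.sum_eq_zero_iff_of_nonneg
        (fun t _ => mul_self_nonneg (c k t))).mp h0' i' (Finset.mem_univ i')
      exact mul_self_eq_zero.mp this
    have hcb : ∀ (k : Fin m) (h : (k : ℕ) < r) (i' : Fin n),
        c k i' = Real.sqrt (ν k) * b ⟨(k : ℕ), lt_of_lt_of_le h hr_le_n⟩ i' := by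
      intro k h i'
      have hmem : (⟨(k : ℕ), lt_of_lt_of_le h hr_le_n⟩ : Fin n) ∈ {i : Fin n | (i : ℕ) < r} := h
      have hbg := hb _ hmem
      have hdk : b ⟨(k : ℕ), lt_of_lt_of_le h hr_le_n⟩ = d k := by
        rw [hbg, hgdef]
        simp only
        rw [dif_pos (show ((⟨(k : ℕ), lt_of_lt_of_le h hr_le_n⟩ : Fin n) : ℕ) < r from h)]
      have hdki : d k i' = (Real.sqrt (ν k))⁻¹ * c k i' := by
        rw [hddef]
        simp [WithLp.equiv_symm_apply, PiLp.toLp_apply]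
      have hsq : Real.sqrt (ν k) ≠ 0 := by
        have : ν k ≠ 0 := (h_iff k).mpr h
        exact ne_of_gt (Real.sqrt_pos.mpr (lt_of_le_of_ne (hν0 k) (Ne.symm this)))
      rw [hdk, hdki, ← mul_assoc, mul_inv_cancel₀ hsq, one_mul]
    set F : ℕ → ℝ := fun t =>
      if h : t < r then
        Real.sqrt (ν ⟨t, lt_of_lt_of_le h hr_le_m⟩) *
          b ⟨t, lt_of_lt_of_le h hr_le_n⟩ i * u (π ⟨t, lt_of_lt_of_le h hr_le_m⟩) j
      else 0 with hFdef
    have hL : ∑ k : Fin m, c k i * u (π k) j = ∑ t ∈ Finset.range m, F t := by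
      rw [← Fin.sum_univ_eq_sum_range]
      refine Finset.sum_congr rfl fun k _ => ?_
      by_cases h : (k : ℕ) < r
      · rw [hFdef]
        simp only
        rw [dif_pos h, hcb k h i]
      · rw [hFdef]
        simp only
        rw [dif_neg h, hczero k h i, zero_mul]
    have hsub : ∑ t ∈ Finset.range (min n m), F t = ∑ t ∈ Finset.range m, F t := by
      refine Finset.sum_subset (Finset.range_subset_range.mpr (min_le_right n m)) ?_
      intro t _ ht
      rw [Finset.mem_range, not_lt] at ht
      rw [hFdef]
      simp only
      rw [dif_neg (by omega)]
    calc A i j = ∑ t ∈ Finset.range m, F t := by rw [← key1, hL]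
      _ = ∑ t ∈ Finset.range (min n m), F t := hsub.symm
      _ = ∑ k : Fin (min n m), F (k : ℕ) := (Fin.sum_univ_eq_sum_range F (min n m)).symm
      _ = _ := by
          refine Finset.sum_congr rfl fun k _ => ?_
          by_cases h : (k : ℕ) < r
          · rw [hFdef]
            simp only [Matrix.of_apply]
            rw [dif_pos h, dif_pos h]
            rfl
          · rw [hFdef]
            simp only [Matrix.of_apply]
            rw [dif_neg h, dif_neg h, zero_mul, zero_mul]

lemma smul_kron_expand {N M d e : ℕ} (σ : Fin d → Matrix (Fin N) (Fin N) ℂ)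
    (τ : Fin e → Matrix (Fin M) (Fin M) ℂ) (wk : ℝ) (x : Fin d → ℝ) (y : Fin e → ℝ) :
    ∑ p, ∑ q, ((wk : ℂ) * (x p : ℂ) * (y q : ℂ)) • (σ p ⊗ₖ τ q)
      = (wk : ℂ) • ((∑ p, (x p : ℂ) • σ p) ⊗ₖ (∑ q, (y q : ℂ) • τ q)) := by
  ext i j
  obtain ⟨i1, i2⟩ := i
  obtain ⟨j1, j2⟩ := j
  simp only [Matrix.sum_apply, Matrix.smul_apply, Matrix.kroneckerMap_apply, smul_eq_mul]
  rw [Finset.sum_mul_sum, Finset.mul_sum]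
  refine Finset.sum_congr rfl fun p _ => ?_
  rw [Finset.mul_sum]
  refine Finset.sum_congr rfl fun q _ => ?_
  ring


lemma new_basis_props {n d : ℕ} (σ : Fin d → Matrix (Fin n) (Fin n) ℂ)
    (hh : ∀ i, (σ i).IsHermitian) (ht : ∀ i, (σ i).trace = 0)
    (ho : ∀ i j, (σ i * σ j).trace = if i = j then 2 else 0)
    (O : Matrix (Fin d) (Fin d) ℝ) (hO : O ∈ Matrix.orthogonalGroup (Fin d) ℝ) :
    (∀ i, (∑ j, ((O i j : ℝ) : ℂ) • σ j).IsHermitian) ∧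
    (∀ i, (∑ j, ((O i j : ℝ) : ℂ) • σ j).trace = 0) ∧
    (∀ i j, ((∑ a, ((O i a : ℝ) : ℂ) • σ a) * (∑ b, ((O j b : ℝ) : ℂ) • σ b)).trace
      = if i = j then 2 else 0) := by
  classical
  have horth : ∀ i j, (∑ a, O i a * O j a) = if i = j then (1 : ℝ) else 0 := by
    intro i j
    have h1 := (Matrix.mem_orthogonalGroup_iff (Fin d) ℝ).mp hO
    have := congrFun (congrFun h1 i) j
    simpa [Matrix.mul_apply, Matrix.star_apply, star_trivial, Matrix.one_apply] using this
  refine ⟨?_, ?_, ?_⟩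
  · intro i
    show _ = _
    rw [Matrix.conjTranspose_sum]
    refine Finset.sum_congr rfl fun j _ => ?_
    rw [Matrix.conjTranspose_smul, (hh j).eq]
    congr 1
    simp [Complex.star_def, Complex.conj_ofReal]
  · intro i
    rw [Matrix.trace_sum]
    simp [Matrix.trace_smul, ht]
  · intro i j
    have hexp : (∑ a, ((O i a : ℝ) : ℂ) • σ a) * (∑ b, ((O j b : ℝ) : ℂ) • σ b)
        = ∑ a, ∑ b, (((O i a : ℝ) : ℂ) * ((O j b : ℝ) : ℂ)) • (σ a * σ b) := by
      rw [Finset.sum_mul_sum]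
      exact Finset.sum_congr rfl fun a _ => Finset.sum_congr rfl fun b _ =>
        smul_mul_smul_comm _ _ _ _
    rw [hexp, Matrix.trace_sum]
    simp only [Matrix.trace_sum, Matrix.trace_smul, ho]
    simp only [smul_eq_mul, mul_ite, mul_zero, Finset.sum_ite_eq, Finset.sum_ite_eq', Finset.mem_univ, if_true]
    have hcast : (∑ a, ((O i a : ℝ) : ℂ) * ((O j a : ℝ) : ℂ) * 2)
        = ((∑ a, O i a * O j a : ℝ) : ℂ) * 2 := by
      push_cast
      rw [Finset.sum_mul]
    rw [hcast, horth]
    split_ifs <;> simp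

theorem svd_diagonalization_of_interaction {N M : ℕ} (hN : 2 ≤ N) (hM : 2 ≤ M)
    (σ : Fin (N ^ 2 - 1) → Matrix (Fin N) (Fin N) ℂ)
    (τ : Fin (M ^ 2 - 1) → Matrix (Fin M) (Fin M) ℂ)
    (hσh : ∀ i, (σ i).IsHermitian) (hσt : ∀ i, (σ i).trace = 0)
    (hσo : ∀ i j, (σ i * σ j).trace = if i = j then 2 else 0)
    (hτh : ∀ k, (τ k).IsHermitian) (hτt : ∀ k, (τ k).trace = 0)
    (hτo : ∀ k l, (τ k * τ l).trace = if k = l then 2 else 0)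
    (v : Fin (N ^ 2 - 1) → Fin (M ^ 2 - 1) → ℝ) :
    ∃ (σ' : Fin (N ^ 2 - 1) → Matrix (Fin N) (Fin N) ℂ)
      (τ' : Fin (M ^ 2 - 1) → Matrix (Fin M) (Fin M) ℂ)
      (w : Fin (min N M ^ 2 - 1) → ℝ)
      (OA : Matrix (Fin (N ^ 2 - 1)) (Fin (N ^ 2 - 1)) ℝ)
      (OB : Matrix (Fin (M ^ 2 - 1)) (Fin (M ^ 2 - 1)) ℝ),
      OA ∈ Matrix.orthogonalGroup (Fin (N ^ 2 - 1)) ℝ ∧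
      OB ∈ Matrix.orthogonalGroup (Fin (M ^ 2 - 1)) ℝ ∧
      (∀ i, σ' i = ∑ j, (OA i j : ℂ) • σ j) ∧
      (∀ i, τ' i = ∑ j, (OB i j : ℂ) • τ j) ∧
      (∀ i, (σ' i).IsHermitian) ∧ (∀ i, (σ' i).trace = 0) ∧
      (∀ i j, (σ' i * σ' j).trace = if i = j then 2 else 0) ∧
      (∀ k, (τ' k).IsHermitian) ∧ (∀ k, (τ' k).trace = 0) ∧
      (∀ k l, (τ' k * τ' l).trace = if k = l then 2 else 0) ∧
      (∀ k, 0 ≤ w k) ∧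
      ∑ i, ∑ j, (v i j : ℂ) • (σ i ⊗ₖ τ j) =
        ∑ k, (w k : ℂ) •
          (σ' (Fin.castLE (Nat.sub_le_sub_right (Nat.pow_le_pow_left (min_le_left N M) 2) 1) k) ⊗ₖ
           τ' (Fin.castLE (Nat.sub_le_sub_right (Nat.pow_le_pow_left (min_le_right N M) 2) 1) k)) := by
  classical
  obtain ⟨U, V, w0, hU, hV, hw0, hfor⟩ := real_svd (N ^ 2 - 1) (M ^ 2 - 1) (Matrix.of v)
  have h : min N M ^ 2 - 1 = min (N ^ 2 - 1) (M ^ 2 - 1) := by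
    rcases le_total N M with h' | h'
    · rw [min_eq_left h', min_eq_left (Nat.sub_le_sub_right (Nat.pow_le_pow_left h' 2) 1)]
    · rw [min_eq_right h', min_eq_right (Nat.sub_le_sub_right (Nat.pow_le_pow_left h' 2) 1)]
  have hstarU : star Uᵀ = U := by
    ext a b
    simp [Matrix.star_apply]
  have hstarU' : star U = Uᵀ := by
    ext a b
    simp [Matrix.star_apply]
  have hstarV : star Vᵀ = V := by
    ext a b
    simp [Matrix.star_apply]
  have hstarV' : star V = Vᵀ := by
    ext a b
    simp [Matrix.star_apply]
  have hOA : Uᵀ ∈ Matrix.orthogonalGroup (Fin (N ^ 2 - 1)) ℝ := by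
    rw [Matrix.mem_orthogonalGroup_iff, Matrix.transpose_transpose]
    exact (Matrix.mem_orthogonalGroup_iff' _ ℝ).mp hU
  have hOB : Vᵀ ∈ Matrix.orthogonalGroup (Fin (M ^ 2 - 1)) ℝ := by
    rw [Matrix.mem_orthogonalGroup_iff, Matrix.transpose_transpose]
    exact (Matrix.mem_orthogonalGroup_iff' _ ℝ).mp hV
  obtain ⟨hσ'h, hσ't, hσ'o⟩ := new_basis_props σ hσh hσt hσo Uᵀ hOA
  obtain ⟨hτ'h, hτ't, hτ'o⟩ := new_basis_props τ hτh hτt hτo Vᵀ hOB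
  refine ⟨fun i => ∑ j, ((Uᵀ i j : ℝ) : ℂ) • σ j,
    fun i => ∑ j, ((Vᵀ i j : ℝ) : ℂ) • τ j,
    fun k => w0 (Fin.cast h k), Uᵀ, Vᵀ, hOA, hOB, fun i => rfl, fun i => rfl,
    hσ'h, hσ't, hσ'o, hτ'h, hτ't, hτ'o, fun k => hw0 _, ?_⟩
  -- the main equation
  have hcoef : ∀ (p : Fin (N ^ 2 - 1)) (q : Fin (M ^ 2 - 1)),
      (v p q : ℂ) = ∑ k : Fin (min N M ^ 2 - 1),
        ((w0 (Fin.cast h k) : ℝ) : ℂ)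
          * ((U p (Fin.castLE (Nat.sub_le_sub_right (Nat.pow_le_pow_left (min_le_left N M) 2) 1) k) : ℝ) : ℂ)
          * ((V q (Fin.castLE (Nat.sub_le_sub_right (Nat.pow_le_pow_left (min_le_right N M) 2) 1) k) : ℝ) : ℂ) := by
    intro p q
    have h2 : v p q = ∑ k : Fin (min N M ^ 2 - 1),
        w0 (Fin.cast h k)
          * U p (Fin.castLE (Nat.sub_le_sub_right (Nat.pow_le_pow_left (min_le_left N M) 2) 1) k)
          * V q (Fin.castLE (Nat.sub_le_sub_right (Nat.pow_le_pow_left (min_le_right N M) 2) 1) k) := by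
      have h3 := hfor p q
      rw [show (Matrix.of v) p q = v p q from rfl] at h3
      rw [h3]
      exact (Fintype.sum_equiv (finCongr h) _ _ (fun k => rfl)).symm
    rw [h2]
    push_cast
    rfl
  calc ∑ i, ∑ j, (v i j : ℂ) • (σ i ⊗ₖ τ j)
      = ∑ p, ∑ q, ∑ k : Fin (min N M ^ 2 - 1),
          (((w0 (Fin.cast h k) : ℝ) : ℂ)
            * ((U p (Fin.castLE (Nat.sub_le_sub_right (Nat.pow_le_pow_left (min_le_left N M) 2) 1) k) : ℝ) : ℂ)
            * ((V q (Fin.castLE (Nat.sub_le_sub_right (Nat.pow_le_pow_left (min_le_right N M) 2) 1) k) : ℝ) : ℂ))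
            • (σ p ⊗ₖ τ q) := by
        refine Finset.sum_congr rfl fun p _ => Finset.sum_congr rfl fun q _ => ?_
        rw [hcoef p q, Finset.sum_smul]
    _ = ∑ k : Fin (min N M ^ 2 - 1), ∑ p, ∑ q,
          (((w0 (Fin.cast h k) : ℝ) : ℂ)
            * ((U p (Fin.castLE (Nat.sub_le_sub_right (Nat.pow_le_pow_left (min_le_left N M) 2) 1) k) : ℝ) : ℂ)
            * ((V q (Fin.castLE (Nat.sub_le_sub_right (Nat.pow_le_pow_left (min_le_right N M) 2) 1) k) : ℝ) : ℂ))
            • (σ p ⊗ₖ τ q) := by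
        exact Eq.trans (Finset.sum_congr rfl fun p _ => Finset.sum_comm) Finset.sum_comm
    _ = _ := by
        refine Finset.sum_congr rfl fun k _ => ?_
        exact smul_kron_expand σ τ (w0 (Fin.cast h k))
          (fun p => U p (Fin.castLE (Nat.sub_le_sub_right (Nat.pow_le_pow_left (min_le_left N M) 2) 1) k))
          (fun q => V q (Fin.castLE (Nat.sub_le_sub_right (Nat.pow_le_pow_left (min_le_right N M) 2) 1) k))
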